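/- For every integer n ≥ 2, the alternating sum of double zeta values of even weight 2n satisfies ∑_{k=2}^{2n-1} (-1)^k ζ(k, 2n-k) = (1/2) ζ(2n). -/

import Mathlib

/-- The Riemann zeta value `ζ(s) = ∑_{k>0} k^{-s}` for a natural number exponent. -/
noncomputable def zetaVal (s : ℕ) : ℝ := ∑' k : ℕ+, (1 : ℝ) / (k : ℝ) ^ s

/-- The double zeta value `ζ(s₁, s₂) = ∑_{k₁ > k₂ > 0} k₁^{-s₁} k₂^{-s₂}`. -/
noncomputable def doubleZeta (s₁ s₂ : ℕ) : ℝ :=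
  ∑' p : {p : ℕ+ × ℕ+ // p.2 < p.1}, (1 : ℝ) / ((p.1.1 : ℝ) ^ s₁ * (p.1.2 : ℝ) ^ s₂)

open Finset Filter


noncomputable def Tail (a : ℕ) : ℝ := ∑ j ∈ Finset.Ico (a + 1) (2 * a + 1), (1 : ℝ) / j

lemma summable_shift (c : ℕ) : Summable (fun i : ℕ => (1:ℝ) / ((i:ℝ) + (c:ℝ) + 1) ^ 2) := by
  have h : Summable (fun n : ℕ => (1:ℝ) / (n:ℝ) ^ 2) :=
    Real.summable_one_div_nat_pow.2 one_lt_two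
  have h2 := h.comp_injective (i := fun i : ℕ => i + (c + 1)) (add_left_injective (c + 1))
  refine h2.congr fun i => ?_
  simp only [Function.comp]
  push_cast
  ring_nf

lemma tel_summable (a : ℕ) :
    Summable (fun i : ℕ => (1:ℝ)/((a:ℝ)+1+i) - 1/((2*(a:ℝ)+1+i))) := by
  have hm : Summable (fun i : ℕ => (a:ℝ) * ((1:ℝ) / ((i:ℝ) + ((0:ℕ):ℝ) + 1) ^ 2)) :=
    (summable_shift 0).mul_left _
  have ha0 : (0:ℝ) ≤ a := Nat.cast_nonneg a
  apply Summable.of_nonneg_of_le (f := fun i : ℕ => (a:ℝ) * ((1:ℝ) / ((i:ℝ) + ((0:ℕ):ℝ) + 1) ^ 2))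
    (fun i => ?_) (fun i => ?_) hm
  · have h1 : (0:ℝ) < (a:ℝ)+1+i := by positivity
    have h2 : (a:ℝ)+1+i ≤ 2*(a:ℝ)+1+i := by linarith
    have := one_div_le_one_div_of_le h1 h2
    linarith
  · have h1 : (0:ℝ) < (a:ℝ)+1+i := by positivity
    have h2 : (0:ℝ) < 2*(a:ℝ)+1+i := by positivity
    have key : (1:ℝ)/((a:ℝ)+1+i) - 1/((2*(a:ℝ)+1+i)) = a / (((a:ℝ)+1+i) * (2*(a:ℝ)+1+i)) := by
      field_simp; ring
    rw [key]
    have hle : (a:ℝ) / (((a:ℝ)+1+i) * (2*(a:ℝ)+1+i)) ≤ (a:ℝ) / ((i:ℝ) + ((0:ℕ):ℝ) + 1) ^ 2 := by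
      gcongr
      push_cast
      nlinarith
    have heq : (a:ℝ) / ((i:ℝ) + ((0:ℕ):ℝ) + 1) ^ 2 = (a:ℝ) * ((1:ℝ) / ((i:ℝ) + ((0:ℕ):ℝ) + 1) ^ 2) := by
      ring
    linarith

lemma tel (a : ℕ) :
    ∑' i : ℕ, ((1:ℝ)/((a:ℝ)+1+i) - 1/((2*(a:ℝ)+1+i))) = Tail a := by
  have hs := tel_summable a
  refine tendsto_nhds_unique hs.hasSum.tendsto_sum_nat ?_
  have key : ∀ N : ℕ, ∑ i ∈ range N, ((1:ℝ)/((a:ℝ)+1+i) - 1/((2*(a:ℝ)+1+i)))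
      = Tail a - ∑ j ∈ Finset.Ico (a + 1 + N) (2*a + 1 + N), (1:ℝ)/j := by
    intro N
    have e1 : ∑ i ∈ range N, (1:ℝ)/((a:ℝ)+1+i)
        = ∑ j ∈ Finset.Ico (a+1) (a+1+N), (1:ℝ)/(j:ℝ) := by
      rw [Finset.sum_Ico_eq_sum_range]
      simp only [Nat.add_sub_cancel_left]
      refine Finset.sum_congr rfl fun i _ => ?_
      push_cast; ring_nf
    have e2 : ∑ i ∈ range N, (1:ℝ)/(2*(a:ℝ)+1+i)
        = ∑ j ∈ Finset.Ico (2*a+1) (2*a+1+N), (1:ℝ)/(j:ℝ) := by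
      rw [Finset.sum_Ico_eq_sum_range]
      simp only [Nat.add_sub_cancel_left]
      refine Finset.sum_congr rfl fun i _ => ?_
      push_cast; ring_nf
    rw [Finset.sum_sub_distrib, e1, e2]
    have s1 : ∑ j ∈ Finset.Ico (a+1) (a+1+N), (1:ℝ)/(j:ℝ)
        + ∑ j ∈ Finset.Ico (a+1+N) (2*a+1+N), (1:ℝ)/(j:ℝ)
        = ∑ j ∈ Finset.Ico (a+1) (2*a+1+N), (1:ℝ)/(j:ℝ) :=
      Finset.sum_Ico_consecutive _ (by omega) (by omega)
    have s2 : ∑ j ∈ Finset.Ico (a+1) (2*a+1), (1:ℝ)/(j:ℝ)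
        + ∑ j ∈ Finset.Ico (2*a+1) (2*a+1+N), (1:ℝ)/(j:ℝ)
        = ∑ j ∈ Finset.Ico (a+1) (2*a+1+N), (1:ℝ)/(j:ℝ) :=
      Finset.sum_Ico_consecutive _ (by omega) (by omega)
    unfold Tail
    linarith
  have hR : Tendsto (fun N : ℕ => ∑ j ∈ Finset.Ico (a + 1 + N) (2*a + 1 + N), (1:ℝ)/j)
      atTop (nhds 0) := by
    have hb : Tendsto (fun N : ℕ => (a:ℝ) / ((N:ℝ)+1)) atTop (nhds 0) := by
      have := (tendsto_const_div_atTop_nhds_zero_nat ((a:ℕ):ℝ)).comp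
        (tendsto_add_atTop_nat 1)
      refine this.congr fun N => ?_
      simp only [Function.comp]
      push_cast; ring_nf
    refine squeeze_zero (fun N => ?_) (fun N => ?_) hb
    · exact Finset.sum_nonneg fun j _ => by positivity
    · have hcard : (Finset.Ico (a + 1 + N) (2*a + 1 + N)).card = a := by
        rw [Nat.card_Ico]; omega
      have := Finset.sum_le_card_nsmul (Finset.Ico (a + 1 + N) (2*a + 1 + N))
        (fun j => (1:ℝ)/j) (1/((N:ℝ)+1)) ?_
      · rw [hcard] at this
        calc ∑ j ∈ Finset.Ico (a + 1 + N) (2*a + 1 + N), (1:ℝ)/j ≤ a • ((1:ℝ)/((N:ℝ)+1)) := this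
          _ = (a:ℝ) / ((N:ℝ)+1) := by rw [nsmul_eq_mul]; ring
      · intro j hj
        rw [Finset.mem_Ico] at hj
        have h1 : ((N:ℝ)+1) ≤ (j:ℝ) := by
          have : N + 1 ≤ j := by omega
          exact_mod_cast this
        have h2 : (0:ℝ) < (N:ℝ)+1 := by positivity
        exact one_div_le_one_div_of_le h2 h1
  have := (tendsto_const_nhds (x := Tail a) (f := atTop (α := ℕ))).sub hR
  rw [sub_zero] at this
  exact Tendsto.congr (fun N => (key N).symm) this


lemma summable_pnat_pow {s : ℕ} (hs : 2 ≤ s) : Summable (fun i : ℕ+ => (1:ℝ)/(i:ℝ)^s) := by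
  have h : Summable (fun n : ℕ => (1:ℝ)/(n:ℝ)^s) :=
    Real.summable_one_div_nat_pow.2 (by omega)
  have h2 := h.comp_injective (i := fun i : ℕ+ => (i:ℕ)) PNat.coe_injective
  exact h2.congr fun i => rfl

lemma summable_base : Summable (fun p : ℕ+ × ℕ+ => (1:ℝ)/(p.1:ℝ)^2 * ((1:ℝ)/(p.2:ℝ)^2)) := by
  have h : Summable (fun i : ℕ+ => (1:ℝ)/(i:ℝ)^2) := summable_pnat_pow le_rfl
  have h2 := Summable.mul_of_nonneg h h (fun i => by positivity) (fun i => by positivity)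
  exact h2

lemma summable_S {f : {p : ℕ+ × ℕ+ // p.2 < p.1} → ℝ}
    (h0 : ∀ p, 0 ≤ f p)
    (hle : ∀ p : {p : ℕ+ × ℕ+ // p.2 < p.1},
      f p ≤ (1:ℝ)/(p.1.1:ℝ)^2 * ((1:ℝ)/(p.1.2:ℝ)^2)) : Summable f := by
  have hb := summable_base.subtype {p : ℕ+ × ℕ+ | p.2 < p.1}
  exact Summable.of_nonneg_of_le h0 hle hb

lemma cast_pos (p : ℕ+) : (0:ℝ) < (p:ℝ) := by exact_mod_cast p.pos

lemma cast_le_cast {l m : ℕ+} (h : l < m) : (l:ℝ) ≤ (m:ℝ) := by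
  have : (l:ℕ) ≤ (m:ℕ) := le_of_lt h
  exact_mod_cast this

lemma one_le_cast (p : ℕ+) : (1:ℝ) ≤ (p:ℝ) := by exact_mod_cast p.one_le

lemma denom_bound {l m : ℕ+} (h : l < m) {a b : ℕ} (hab : 1 ≤ a + b) :
    (m:ℝ)^2 * (l:ℝ)^2 ≤ (m:ℝ)^(a+2) * (l:ℝ)^(b+1) := by
  have hl1 : (1:ℝ) ≤ (l:ℝ) := one_le_cast l
  have hlm : (l:ℝ) ≤ (m:ℝ) := cast_le_cast h
  have h2 : (l:ℝ)^a ≤ (m:ℝ)^a := pow_le_pow_left₀ (by linarith) hlm a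
  have hm2 : (0:ℝ) ≤ (m:ℝ)^2 := by positivity
  have hl : (0:ℝ) ≤ (l:ℝ)^(b+1) := by positivity
  calc (m:ℝ)^2 * (l:ℝ)^2 ≤ (m:ℝ)^2 * (l:ℝ)^(a+b+1) :=
        mul_le_mul_of_nonneg_left (pow_le_pow_right₀ hl1 (by omega)) hm2
    _ = (m:ℝ)^2 * ((l:ℝ)^a * (l:ℝ)^(b+1)) := by ring
    _ ≤ (m:ℝ)^2 * ((m:ℝ)^a * (l:ℝ)^(b+1)) :=
        mul_le_mul_of_nonneg_left (mul_le_mul_of_nonneg_right h2 hl) hm2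
    _ = (m:ℝ)^(a+2) * (l:ℝ)^(b+1) := by ring

lemma summable_fk {n k : ℕ} (hn : 2 ≤ n) (hk : k ∈ Finset.Icc 2 (2*n-1)) :
    Summable (fun p : {p : ℕ+ × ℕ+ // p.2 < p.1} =>
      (1:ℝ) / ((p.1.1:ℝ)^k * (p.1.2:ℝ)^(2*n-k))) := by
  rw [Finset.mem_Icc] at hk
  refine summable_S (fun p => by positivity) (fun p => ?_)
  obtain ⟨a, ha⟩ : ∃ a, k = a + 2 := ⟨k - 2, by omega⟩
  obtain ⟨b, hb⟩ : ∃ b, 2*n - k = b + 1 := ⟨2*n - k - 1, by omega⟩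
  have hab : 1 ≤ a + b := by omega
  have hd := denom_bound p.2 (a := a) (b := b) hab
  rw [hb, ha, one_div_mul_one_div]
  refine one_div_le_one_div_of_le ?_ hd
  have := cast_pos p.1.1; have := cast_pos p.1.2
  positivity

lemma summable_F {n : ℕ} (hn : 2 ≤ n) :
    Summable (fun p : {p : ℕ+ × ℕ+ // p.2 < p.1} =>
      (1:ℝ) / (((p.1.1:ℝ) + (p.1.2:ℝ)) * (p.1.1:ℝ) * (p.1.2:ℝ)^(2*n-2))) := by
  refine summable_S (fun p => ?_) (fun p => ?_)
  · have := cast_pos p.1.1; have := cast_pos p.1.2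
    positivity
  · have h1 := cast_pos p.1.1; have h2 := cast_pos p.1.2
    have hl1 : (1:ℝ) ≤ (p.1.2:ℝ) := one_le_cast _
    rw [one_div_mul_one_div]
    refine one_div_le_one_div_of_le (by positivity) ?_
    have e1 : (p.1.2:ℝ)^2 ≤ (p.1.2:ℝ)^(2*n-2) := pow_le_pow_right₀ hl1 (by omega)
    have e2 : (p.1.1:ℝ)^2 ≤ ((p.1.1:ℝ) + (p.1.2:ℝ)) * (p.1.1:ℝ) := by nlinarith
    nlinarith [pow_pos h2 2, pow_pos h2 (2*n-2)]

lemma summable_G {n : ℕ} (hn : 2 ≤ n) :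
    Summable (fun p : {p : ℕ+ × ℕ+ // p.2 < p.1} =>
      (1:ℝ) / (((p.1.1:ℝ) + (p.1.2:ℝ)) * (p.1.1:ℝ)^(2*n-1))) := by
  refine summable_S (fun p => ?_) (fun p => ?_)
  · have := cast_pos p.1.1; have := cast_pos p.1.2
    positivity
  · have h1 := cast_pos p.1.1; have h2 := cast_pos p.1.2
    have hlm : (p.1.2:ℝ) ≤ (p.1.1:ℝ) := cast_le_cast p.2
    have hm1 : (1:ℝ) ≤ (p.1.1:ℝ) := one_le_cast _
    rw [one_div_mul_one_div]
    refine one_div_le_one_div_of_le (by positivity) ?_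
    obtain ⟨c, hc⟩ : ∃ c, 2*n - 1 = c + 3 := ⟨2*n - 4, by omega⟩
    rw [hc]
    calc (p.1.1:ℝ)^2 * (p.1.2:ℝ)^2 ≤ (p.1.1:ℝ)^2 * (p.1.1:ℝ)^2 := by
          have : (p.1.2:ℝ)^2 ≤ (p.1.1:ℝ)^2 := pow_le_pow_left₀ (by linarith) hlm 2
          nlinarith [pow_pos h1 2]
      _ = (p.1.1:ℝ)^4 := by ring
      _ ≤ (p.1.1:ℝ)^(c+4) := pow_le_pow_right₀ hm1 (by omega)
      _ = (p.1.1:ℝ) * (p.1.1:ℝ)^(c+3) := by ring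
      _ ≤ ((p.1.1:ℝ) + (p.1.2:ℝ)) * (p.1.1:ℝ)^(c+3) := by
          have : (0:ℝ) ≤ (p.1.1:ℝ)^(c+3) := by positivity
          nlinarith


lemma pair_eval (x y : ℝ) (hx : 0 < x) (hy : 0 < y) (n : ℕ) (hn : 2 ≤ n) :
    ∑ k ∈ Finset.Icc 2 (2*n-1), (-1:ℝ)^k / (x^k * y^(2*n-k))
      = 1/((x+y)*x*y^(2*n-2)) - 1/((x+y)*x^(2*n-1)) := by
  have hxy : x + y ≠ 0 := by positivity
  have hx' : x ≠ 0 := ne_of_gt hx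
  have hy' : y ≠ 0 := ne_of_gt hy
  set h : ℕ → ℝ := fun k => (-1:ℝ)^k / ((x+y) * x^k * y^(2*n-1-k)) with hh
  have step : ∀ k ∈ Finset.Icc 2 (2*n-1),
      (-1:ℝ)^k / (x^k * y^(2*n-k)) = h k - h (k-1) := by
    intro k hk
    rw [Finset.mem_Icc] at hk
    obtain ⟨a, rfl⟩ : ∃ a, k = a + 2 := ⟨k - 2, by omega⟩
    obtain ⟨b, hb⟩ : ∃ b, 2*n - 1 - (a+2) = b := ⟨_, rfl⟩
    have e1 : 2*n - (a+2) = b + 1 := by omega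
    have e2 : 2*n - 1 - (a+2-1) = b + 1 := by omega
    have e3 : a + 2 - 1 = a + 1 := by omega
    have e4 : 2*n - 1 - (a+1) = b + 1 := by omega
    simp only [hh, e1, e2, e3, e4, hb]
    have hpow : ∀ m : ℕ, (-1:ℝ)^(m+1) = -((-1:ℝ)^m) := fun m => by
      rw [pow_succ]; ring
    rw [show a+2 = (a+1)+1 from rfl, hpow, hpow]
    field_simp
    ring
  rw [Finset.sum_congr rfl step]
  have hIcc : Finset.Icc 2 (2*n-1) = Finset.Ico 2 (2*n-1+1) := by
    rw [Finset.Ico_add_one_right_eq_Icc]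
  rw [hIcc, Finset.sum_Ico_eq_sum_range]
  have hcard : 2*n-1+1-2 = 2*n-2 := by omega
  rw [hcard]
  have : ∀ i, h (2 + i) - h (2 + i - 1) = (fun j => h (j+1)) (i+1) - (fun j => h (j+1)) i := by
    intro i
    simp only []
    congr 2 <;> omega
  rw [Finset.sum_congr rfl (fun i _ => this i), Finset.sum_range_sub (fun j => h (j+1))]
  have e5 : 2*n-2+1 = 2*n-1 := by omega
  simp only [e5, hh]
  have hodd : Odd (2*n-1) := by
    refine ⟨n-1, by omega⟩
  rw [hodd.neg_one_pow]
  have e6 : 2*n-1-(2*n-1) = 0 := by omega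
  have e7 : 2*n-1-1 = 2*n-2 := by omega
  rw [e6, e7]
  field_simp
  ring



/-- reindexing equivalence -/
def eA : ℕ+ × ℕ+ ≃ {p : ℕ+ × ℕ+ // p.2 < p.1} where
  toFun q := ⟨(q.1 + q.2, q.1), PNat.lt_add_right _ _⟩
  invFun p := (p.1.2, p.1.1 - p.1.2)
  left_inv q := by
    have h : q.1 < q.1 + q.2 := PNat.lt_add_right _ _
    have h2 : q.1 + (q.1 + q.2 - q.1) = q.1 + q.2 := PNat.add_sub_of_lt h
    have h3 : q.1 + q.2 - q.1 = q.2 := by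
      have := add_left_cancel h2
      exact this
    simp [h3]
  right_inv p := by
    have h2 : p.1.2 + (p.1.1 - p.1.2) = p.1.1 := PNat.add_sub_of_lt p.2
    ext
    · simp [h2]
    · simp

lemma succPNat_cast (i : ℕ) : ((Equiv.pnatEquivNat.symm i : ℕ+) : ℝ) = (i:ℝ) + 1 := by
  have h : ((Equiv.pnatEquivNat.symm i : ℕ+) : ℕ) = i + 1 := by
    simp [Equiv.pnatEquivNat, Nat.succPNat]
  exact_mod_cast h


lemma key_tel (l : ℕ+) :
    ∑' d : ℕ+, ((1:ℝ)/((l:ℝ)+(d:ℝ)) - 1/(2*(l:ℝ)+(d:ℝ))) = Tail (l:ℕ) := by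
  rw [← (Equiv.pnatEquivNat.symm).tsum_eq
    (f := fun d : ℕ+ => ((1:ℝ)/((l:ℝ)+(d:ℝ)) - 1/(2*(l:ℝ)+(d:ℝ))))]
  rw [← tel (l:ℕ)]
  refine tsum_congr fun i => ?_
  rw [succPNat_cast]
  ring_nf


lemma evalF {n : ℕ} (hn : 2 ≤ n) :
    ∑' p : {p : ℕ+ × ℕ+ // p.2 < p.1},
      (1:ℝ) / (((p.1.1:ℝ) + (p.1.2:ℝ)) * (p.1.1:ℝ) * (p.1.2:ℝ)^(2*n-2))
    = ∑' l : ℕ+, (1:ℝ)/(l:ℝ)^(2*n-1) * Tail (l:ℕ) := by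
  set F : {p : ℕ+ × ℕ+ // p.2 < p.1} → ℝ := fun p =>
    (1:ℝ) / (((p.1.1:ℝ) + (p.1.2:ℝ)) * (p.1.1:ℝ) * (p.1.2:ℝ)^(2*n-2)) with hF
  have hFS : Summable F := summable_F hn
  have hFe : Summable (fun q : ℕ+ × ℕ+ => F (eA q)) := (eA.summable_iff (f := F)).2 hFS
  rw [← eA.tsum_eq (f := F)]
  rw [Summable.tsum_prod' hFe hFe.prod_factor]
  refine tsum_congr fun l => ?_
  have hterm : ∀ d : ℕ+, F (eA (l, d))
      = (1/(l:ℝ)^(2*n-1)) * ((1:ℝ)/((l:ℝ)+(d:ℝ)) - 1/(2*(l:ℝ)+(d:ℝ))) := by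
    intro d
    have hl : (0:ℝ) < (l:ℝ) := by exact_mod_cast l.pos
    have hd : (0:ℝ) < (d:ℝ) := by exact_mod_cast d.pos
    have hp : (l:ℝ)^(2*n-1) = (l:ℝ)^(2*n-2) * l := by
      rw [← pow_succ]; congr 1; omega
    simp only [hF, eA, Equiv.coe_fn_mk]
    push_cast
    rw [hp]
    have h1 : (l:ℝ) + (d:ℝ) ≠ 0 := by positivity
    have h2 : 2*(l:ℝ) + (d:ℝ) ≠ 0 := by positivity
    have h3 : (l:ℝ) ≠ 0 := ne_of_gt hl
    have h4 : (l:ℝ)^(2*n-2) ≠ 0 := by positivity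
    field_simp
    ring
  rw [tsum_congr hterm, tsum_mul_left, key_tel l]


lemma innerG {n : ℕ} (hn : 2 ≤ n) (m : ℕ+) :
    ∑' l : ℕ+, Set.indicator {p : ℕ+ × ℕ+ | p.2 < p.1}
        (fun q : ℕ+ × ℕ+ => (1:ℝ) / (((q.1:ℝ) + (q.2:ℝ)) * (q.1:ℝ)^(2*n-1))) (m, l)
      = (1:ℝ)/(m:ℝ)^(2*n-1) * (Tail (m:ℕ) - 1/(2*(m:ℝ))) := by
  set g : ℕ+ × ℕ+ → ℝ := fun q => (1:ℝ) / (((q.1:ℝ) + (q.2:ℝ)) * (q.1:ℝ)^(2*n-1)) with hg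
  set s : Set (ℕ+ × ℕ+) := {p : ℕ+ × ℕ+ | p.2 < p.1} with hs
  rw [← (Equiv.pnatEquivNat.symm).tsum_eq
    (f := fun l : ℕ+ => Set.indicator s g (m, l))]
  set M : ℕ := (m:ℕ) with hM
  have hM1 : 1 ≤ M := m.one_le
  have hvanish : ∀ i ∉ Finset.range (M - 1),
      Set.indicator s g (m, Equiv.pnatEquivNat.symm i) = 0 := by
    intro i hi
    rw [Finset.mem_range] at hi
    apply Set.indicator_of_notMem
    rw [hs, Set.mem_setOf_eq]
    intro hlt
    have h1 : ((Equiv.pnatEquivNat.symm i : ℕ+) : ℕ) < (m:ℕ) := hlt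
    have h2 : ((Equiv.pnatEquivNat.symm i : ℕ+) : ℕ) = i + 1 := by
      simp [Equiv.pnatEquivNat, Nat.succPNat]
    omega
  rw [tsum_eq_sum hvanish]
  have hmem : ∀ i ∈ Finset.range (M - 1),
      Set.indicator s g (m, Equiv.pnatEquivNat.symm i)
        = (1:ℝ)/(m:ℝ)^(2*n-1) * ((1:ℝ)/((m:ℝ)+(i:ℝ)+1)) := by
    intro i hi
    rw [Finset.mem_range] at hi
    have h2 : ((Equiv.pnatEquivNat.symm i : ℕ+) : ℕ) = i + 1 := by
      simp [Equiv.pnatEquivNat, Nat.succPNat]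
    have hmem' : ((m : ℕ+), (Equiv.pnatEquivNat.symm i : ℕ+)) ∈ s := by
      rw [hs, Set.mem_setOf_eq]
      have : ((Equiv.pnatEquivNat.symm i : ℕ+) : ℕ) < (m:ℕ) := by omega
      exact this
    rw [Set.indicator_of_mem hmem', hg]
    have hc : ((Equiv.pnatEquivNat.symm i : ℕ+) : ℝ) = (i:ℝ) + 1 := succPNat_cast i
    simp only [hc]
    have ha : (0:ℝ) < (m:ℝ) := by exact_mod_cast m.pos
    have h1 : (m:ℝ) + ((i:ℝ)+1) ≠ 0 := by positivity
    have h4 : (m:ℝ)^(2*n-1) ≠ 0 := by positivity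
    field_simp
    ring
  rw [Finset.sum_congr rfl hmem, ← Finset.mul_sum]
  congr 1
  have hTe : Tail M = ∑ k ∈ Finset.range M, (1:ℝ)/((m:ℝ)+(k:ℝ)+1) := by
    unfold Tail
    rw [Finset.sum_Ico_eq_sum_range]
    have hcard : 2*M + 1 - (M + 1) = M := by omega
    rw [hcard]
    refine Finset.sum_congr rfl fun i _ => ?_
    congr 1
    push_cast [hM]
    ring
  have hsucc := Finset.sum_range_succ (fun k => (1:ℝ)/((m:ℝ)+(k:ℝ)+1)) (M-1)
  have hM'' : M - 1 + 1 = M := by omega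
  rw [hM''] at hsucc
  have hlast : (1:ℝ)/((m:ℝ)+((M-1 : ℕ):ℝ)+1) = 1/(2*(m:ℝ)) := by
    have hc : ((M - 1 : ℕ):ℝ) = (m:ℝ) - 1 := by
      rw [Nat.cast_sub hM1, Nat.cast_one, hM]
    rw [hc]
    congr 1
    ring
  rw [hTe, hsucc]
  rw [hlast]
  ring

lemma evalG {n : ℕ} (hn : 2 ≤ n) :
    ∑' p : {p : ℕ+ × ℕ+ // p.2 < p.1},
      (1:ℝ) / (((p.1.1:ℝ) + (p.1.2:ℝ)) * (p.1.1:ℝ)^(2*n-1))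
    = ∑' m : ℕ+, (1:ℝ)/(m:ℝ)^(2*n-1) * (Tail (m:ℕ) - 1/(2*(m:ℝ))) := by
  set g : ℕ+ × ℕ+ → ℝ := fun q => (1:ℝ) / (((q.1:ℝ) + (q.2:ℝ)) * (q.1:ℝ)^(2*n-1)) with hg
  set s : Set (ℕ+ × ℕ+) := {p : ℕ+ × ℕ+ | p.2 < p.1} with hs
  have h1 : ∑' p : {p : ℕ+ × ℕ+ // p.2 < p.1},
      (1:ℝ) / (((p.1.1:ℝ) + (p.1.2:ℝ)) * (p.1.1:ℝ)^(2*n-1))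
      = ∑' q : ℕ+ × ℕ+, s.indicator g q := tsum_subtype s g
  have hGS : Summable (fun p : {p : ℕ+ × ℕ+ // p.2 < p.1} =>
      (1:ℝ) / (((p.1.1:ℝ) + (p.1.2:ℝ)) * (p.1.1:ℝ)^(2*n-1))) := summable_G hn
  have hInd : Summable (s.indicator g) := summable_subtype_iff_indicator.1 hGS
  rw [h1, Summable.tsum_prod' hInd hInd.prod_factor]
  exact tsum_congr fun m => innerG hn m


lemma Tail_nonneg (a : ℕ) : 0 ≤ Tail a :=
  Finset.sum_nonneg fun j _ => by positivity

lemma Tail_le_one (a : ℕ) : Tail a ≤ 1 := by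
  have hcard : (Finset.Ico (a+1) (2*a+1)).card = a := by rw [Nat.card_Ico]; omega
  have hb := Finset.sum_le_card_nsmul (Finset.Ico (a+1) (2*a+1))
    (fun j => (1:ℝ)/(j:ℝ)) (1/((a:ℝ)+1)) ?_
  · rw [hcard] at hb
    have h2 : a • ((1:ℝ)/((a:ℝ)+1)) = (a:ℝ)/((a:ℝ)+1) := by
      rw [nsmul_eq_mul]; ring
    have h3 : (a:ℝ)/((a:ℝ)+1) ≤ 1 := by
      rw [div_le_one (by positivity)]; linarith
    calc Tail a ≤ (a:ℕ) • ((1:ℝ)/((a:ℝ)+1)) := hb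
      _ = (a:ℝ)/((a:ℝ)+1) := h2
      _ ≤ 1 := h3
  · intro j hj
    rw [Finset.mem_Ico] at hj
    have h1 : ((a:ℝ)+1) ≤ (j:ℝ) := by exact_mod_cast hj.1
    exact one_div_le_one_div_of_le (by positivity) h1

theorem euler_alternating_sum (n : ℕ) (hn : 2 ≤ n) :
    ∑ k ∈ Finset.Icc 2 (2 * n - 1), (-1 : ℝ) ^ k * doubleZeta k (2 * n - k)
      = (1 / 2) * zetaVal (2 * n) := by
  have step1 : ∀ k ∈ Finset.Icc 2 (2*n-1),
      (-1:ℝ)^k * doubleZeta k (2*n-k)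
      = ∑' p : {p : ℕ+ × ℕ+ // p.2 < p.1},
          ((-1:ℝ)^k * ((1:ℝ)/((p.1.1:ℝ)^k * (p.1.2:ℝ)^(2*n-k)))) := by
    intro k _
    rw [doubleZeta, ← tsum_mul_left]
  rw [Finset.sum_congr rfl step1,
    ← Summable.tsum_finsetSum (fun k hk => ((summable_fk hn hk).mul_left _))]
  have step3 : ∀ p : {p : ℕ+ × ℕ+ // p.2 < p.1},
      ∑ k ∈ Finset.Icc 2 (2*n-1),
        ((-1:ℝ)^k * ((1:ℝ)/((p.1.1:ℝ)^k * (p.1.2:ℝ)^(2*n-k))))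
      = (1:ℝ) / (((p.1.1:ℝ) + (p.1.2:ℝ)) * (p.1.1:ℝ) * (p.1.2:ℝ)^(2*n-2))
        - (1:ℝ) / (((p.1.1:ℝ) + (p.1.2:ℝ)) * (p.1.1:ℝ)^(2*n-1)) := by
    intro p
    have hpe := pair_eval (p.1.1:ℝ) (p.1.2:ℝ) (cast_pos _) (cast_pos _) n hn
    rw [← hpe]
    exact Finset.sum_congr rfl fun k _ => mul_one_div _ _
  rw [tsum_congr step3, Summable.tsum_sub (summable_F hn) (summable_G hn),
    evalF hn, evalG hn]
  have hzs : Summable (fun l : ℕ+ => (1:ℝ)/(l:ℝ)^(2*n-1)) := summable_pnat_pow (by omega)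
  have hA : Summable (fun l : ℕ+ => (1:ℝ)/(l:ℝ)^(2*n-1) * Tail (l:ℕ)) := by
    refine Summable.of_nonneg_of_le (fun l => ?_) (fun l => ?_) hzs
    · have := cast_pos l
      have := Tail_nonneg (l:ℕ)
      positivity
    · have h1 : (0:ℝ) < (l:ℝ)^(2*n-1) := by
        have := cast_pos l; positivity
      have h2 := Tail_le_one (l:ℕ)
      have h3 : (0:ℝ) ≤ (1:ℝ)/(l:ℝ)^(2*n-1) := by positivity
      nlinarith
  have hC : Summable (fun l : ℕ+ => (1/2 : ℝ) * ((1:ℝ)/(l:ℝ)^(2*n))) :=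
    (summable_pnat_pow (by omega)).mul_left _
  have hid : ∀ l : ℕ+, (1:ℝ)/(l:ℝ)^(2*n-1) * (Tail (l:ℕ) - 1/(2*(l:ℝ)))
      = (1:ℝ)/(l:ℝ)^(2*n-1) * Tail (l:ℕ) - (1/2 : ℝ) * ((1:ℝ)/(l:ℝ)^(2*n)) := by
    intro l
    have hl : (0:ℝ) < (l:ℝ) := cast_pos l
    have hp : (l:ℝ)^(2*n) = (l:ℝ)^(2*n-1) * l := by
      rw [← pow_succ]; congr 1; omega
    have h4 : (l:ℝ)^(2*n-1) ≠ 0 := by positivity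
    rw [hp]
    field_simp
  rw [tsum_congr hid, Summable.tsum_sub hA hC, tsum_mul_left]
  have hz : zetaVal (2*n) = ∑' l : ℕ+, (1:ℝ)/(l:ℝ)^(2*n) := rfl
  rw [hz]
  ring
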